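/- Let n, k, ℓ, ℓ*, τ be integers with n ≥ 10, k ≥ 2, τ ≥ 1, 1 ≤ ℓ ≤ n/5, and 1 ≤ ℓ* ≤ n/20 + 1, and let g ≥ 1 be a real number. Define f(m, j, t) := g^{j(m−j)/(k−1)} · 2^{j(m−j)·m²/2^t}. Then f(n−ℓ*, ℓ, τ) · f(n, ℓ*, τ−1)^{ℓ/(n−ℓ*)} ≤ f(n, ℓ, τ). -/

import Mathlib

noncomputable section

/-- `f(m, j, t) = g^(j(m-j)/(k-1)) * 2^(j(m-j)·m²/2^t)`. -/
def f (g : ℝ) (k m j t : ℤ) : ℝ :=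
  g ^ ((j : ℝ) * ((m : ℝ) - (j : ℝ)) / ((k : ℝ) - 1)) *
    2 ^ ((j : ℝ) * ((m : ℝ) - (j : ℝ)) * (m : ℝ) ^ 2 / 2 ^ (t : ℝ))

theorem stmt11 (n k ℓ lstar τ : ℤ) (hn : 10 ≤ n) (hk : 2 ≤ k) (hτ : 1 ≤ τ)
    (hℓ1 : 1 ≤ ℓ) (hℓ2 : (ℓ : ℝ) ≤ (n : ℝ) / 5)
    (hlstar1 : 1 ≤ lstar) (hlstar2 : (lstar : ℝ) ≤ (n : ℝ) / 20 + 1)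
    (g : ℝ) (hg : 1 ≤ g) :
    f g k (n - lstar) ℓ τ * f g k n lstar (τ - 1) ^ ((ℓ : ℝ) / ((n : ℝ) - (lstar : ℝ))) ≤
      f g k n ℓ τ := by
  have hg0 : (0:ℝ) < g := lt_of_lt_of_le one_pos hg
  have hN : (10:ℝ) ≤ (n:ℝ) := by exact_mod_cast hn
  have hL1 : (1:ℝ) ≤ (ℓ:ℝ) := by exact_mod_cast hℓ1
  have hS1 : (1:ℝ) ≤ (lstar:ℝ) := by exact_mod_cast hlstar1
  have hk2 : (2:ℝ) ≤ (k:ℝ) := by exact_mod_cast hk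
  have hk1 : (0:ℝ) < (k:ℝ) - 1 := by linarith
  have hNS : (0:ℝ) < (n:ℝ) - (lstar:ℝ) := by nlinarith
  have hT : (0:ℝ) < (2:ℝ) ^ ((τ:ℤ):ℝ) := Real.rpow_pos_of_pos two_pos _
  unfold f
  push_cast
  set N := (n:ℝ)
  set L := (ℓ:ℝ)
  set S := (lstar:ℝ)
  have hT1 : (2:ℝ) ^ ((τ:ℝ) - 1) = (2:ℝ) ^ ((τ:ℤ):ℝ) / 2 := by
    rw [Real.rpow_sub two_pos, Real.rpow_one]
  rw [hT1]
  set T := (2:ℝ) ^ ((τ:ℤ):ℝ) with hTdef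
  rw [Real.mul_rpow (by positivity) (by positivity),
    ← Real.rpow_mul (le_of_lt hg0), ← Real.rpow_mul (by norm_num : (0:ℝ) ≤ 2),
    mul_mul_mul_comm, ← Real.rpow_add hg0, ← Real.rpow_add two_pos]
  have hA : L * (N - S - L) / (↑k - 1) + S * (N - S) / (↑k - 1) * (L / (N - S))
      = L * (N - L) / (↑k - 1) := by
    field_simp
    ring
  rw [hA]
  have hkey : L * (N - S - L) * (N - S) ^ 2 + 2 * (S * L) * N ^ 2 ≤ L * (N - L) * N ^ 2 := by
    nlinarith [mul_pos (lt_of_lt_of_le one_pos hL1) (lt_of_lt_of_le one_pos hS1),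
      mul_nonneg (mul_nonneg (by linarith : (0:ℝ) ≤ L) (by linarith : (0:ℝ) ≤ S))
        (by nlinarith : (0:ℝ) ≤ N ^ 2 - 3 * N * S - 2 * N * L),
      mul_nonneg (mul_nonneg (by linarith : (0:ℝ) ≤ L) (by linarith : (0:ℝ) ≤ S))
        (by nlinarith : (0:ℝ) ≤ L * S + S ^ 2)]
  have hB : L * (N - S - L) * (N - S) ^ 2 / T + S * (N - S) * N ^ 2 / (T / 2) * (L / (N - S))
      ≤ L * (N - L) * N ^ 2 / T := by
    have heq : S * (N - S) * N ^ 2 / (T / 2) * (L / (N - S)) = 2 * (S * L) * N ^ 2 / T := by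
      field_simp
    rw [heq, ← add_div]
    exact div_le_div_of_nonneg_right hkey hT.le
  exact mul_le_mul_of_nonneg_left (Real.rpow_le_rpow_of_exponent_le one_le_two hB)
    (le_of_lt (Real.rpow_pos_of_pos hg0 _))
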